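/- arXiv:1806.06317 — 3 statements merged into one kernel-verified Lean document; each statement's English description precedes it below -/
import Mathlib

section
/- Let σ > 0 and m ∈ ℕ, m ≥ 1, and let z_1, …, z_m be the m-th roots of unity. Set α = (2σ + 1 − √(4σ+1))/(2σ), so that 0 < α < 1. Then β_m := (1/m) Σ_{j=1}^m 1/(1 + 2σ − σz_j − σ\bar{z_j}) = (1 + α^m)/((1 − α^m)·√(4σ+1)). Consequently β_m → 1/√(1 + 4σ) as m → ∞. -/
open Complex Filter

open Finset in
private lemma sum_inv_sub_roots (m : ℕ) (hm : 1 ≤ m) (x : ℂ) (hx : x ^ m ≠ 1) :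
    ∑ j ∈ Finset.range m, (x - Complex.exp (2 * Real.pi * Complex.I / m) ^ j)⁻¹
      = m * x ^ (m - 1) / (x ^ m - 1) := by
  set ζ := Complex.exp (2 * Real.pi * Complex.I / m) with hζdef
  have hζ : IsPrimitiveRoot ζ m := Complex.isPrimitiveRoot_exp m (by omega)
  have hζm : ζ ^ m = 1 := hζ.pow_eq_one
  have hxm1 : x ^ m - 1 ≠ 0 := sub_ne_zero.mpr hx
  have hne : ∀ j, x - ζ ^ j ≠ 0 := by
    intro j h
    apply hx
    have hxe : x = ζ ^ j := sub_eq_zero.mp h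
    rw [hxe, ← pow_mul, mul_comm, pow_mul, hζm, one_pow]
  have step : ∀ j, (x - ζ ^ j)⁻¹
      = (∑ k ∈ Finset.range m, x ^ k * (ζ ^ j) ^ (m - 1 - k)) / (x ^ m - 1) := by
    intro j
    rw [eq_div_iff hxm1]
    have h2 : (∑ k ∈ Finset.range m, x ^ k * (ζ ^ j) ^ (m - 1 - k)) * (x - ζ ^ j)
        = x ^ m - (ζ ^ j) ^ m := geom_sum₂_mul x (ζ ^ j) m
    have h3 : (ζ ^ j) ^ m = 1 := by
      rw [← pow_mul, mul_comm, pow_mul, hζm, one_pow]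
    rw [h3] at h2
    rw [← h2]
    field_simp [hne j]
  rw [Finset.sum_congr rfl (fun j _ => step j), ← Finset.sum_div]
  congr 1
  have swap : ∑ j ∈ Finset.range m, ∑ k ∈ Finset.range m, x ^ k * (ζ ^ j) ^ (m - 1 - k)
      = ∑ k ∈ Finset.range m, x ^ k * ∑ j ∈ Finset.range m, (ζ ^ (m - 1 - k)) ^ j := by
    rw [Finset.sum_comm]
    exact Finset.sum_congr rfl fun k _ => by
      rw [Finset.mul_sum]
      exact Finset.sum_congr rfl fun j _ => by rw [← pow_mul, ← pow_mul, Nat.mul_comm j (m-1-k)]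
  rw [swap]
  have inner : ∀ k ∈ Finset.range m, x ^ k * ∑ j ∈ Finset.range m, (ζ ^ (m - 1 - k)) ^ j
      = if k = m - 1 then (m : ℂ) * x ^ (m-1) else 0 := by
    intro k hk
    rw [Finset.mem_range] at hk
    by_cases hkm : k = m - 1
    · subst hkm
      simp [Nat.sub_self]
      ring
    · have hd : 0 < m - 1 - k ∧ m - 1 - k < m := by omega
      have hz1 : ζ ^ (m - 1 - k) ≠ 1 := hζ.pow_ne_one_of_pos_of_lt hd.1.ne' hd.2
      rw [geom_sum_eq hz1, ← pow_mul, Nat.mul_comm (m-1-k) m, pow_mul, hζm, one_pow]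
      simp [hkm]
  rw [Finset.sum_congr rfl inner, Finset.sum_ite_eq' (Finset.range m) (m-1)]
  simp [Finset.mem_range]
  omega

open Finset in
private lemma partial_frac (σ a b z : ℂ) (hσ : σ ≠ 0)
    (ha21 : a ^ 2 - 1 ≠ 0)
    (hza : a - z ≠ 0) (hzb : b - z ≠ 0) (hab : a * b = 1) :
    (1:ℂ) / (-σ * (z - a) * (z - b) * z⁻¹)
      = (a ^ 2 / (σ * (a ^ 2 - 1))) * (a - z)⁻¹ + (1 / (σ * (1 - a ^ 2))) * (b - z)⁻¹ := by
  have hza' : z - a ≠ 0 := fun h => hza (by linear_combination -h)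
  have hzb' : z - b ≠ 0 := fun h => hzb (by linear_combination -h)
  have h4 : (1:ℂ) - a ^ 2 ≠ 0 := fun h => ha21 (by linear_combination -h)
  field_simp
  linear_combination ((a - z) * (b - z) * (a ^ 2 - 1) * a) * hab

lemma key_sum (m : ℕ) (hm : 1 ≤ m) (σ a : ℂ) (hσ : σ ≠ 0) (ha0 : a ≠ 0)
    (ha2 : a ^ 2 ≠ 1) (hrel : σ * a ^ 2 - (1 + 2 * σ) * a + σ = 0) (ham : a ^ m ≠ 1) :
    ∑ j ∈ Finset.range m,
      (1 : ℂ) / (1 + 2 * σ - σ * Complex.exp (2 * Real.pi * Complex.I / m) ^ j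
        - σ * (Complex.exp (2 * Real.pi * Complex.I / m) ^ j)⁻¹)
      = m * a * (1 + a ^ m) / ((1 - a ^ m) * σ * (1 - a ^ 2)) := by
  set ζ := Complex.exp (2 * Real.pi * Complex.I / m) with hζdef
  have hζ : IsPrimitiveRoot ζ m := Complex.isPrimitiveRoot_exp m (by omega)
  have hζm : ζ ^ m = 1 := hζ.pow_eq_one
  have ha21 : a ^ 2 - 1 ≠ 0 := sub_ne_zero.mpr ha2
  have ham1 : a ^ m - 1 ≠ 0 := sub_ne_zero.mpr ham
  have hbm : (a⁻¹) ^ m ≠ 1 := by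
    rw [inv_pow]
    intro h
    exact ham (by rw [← inv_inv (a ^ m), h, inv_one])
  have step : ∀ j ∈ Finset.range m,
      (1 : ℂ) / (1 + 2 * σ - σ * ζ ^ j - σ * (ζ ^ j)⁻¹)
      = (a ^ 2 / (σ * (a ^ 2 - 1))) * (a - ζ ^ j)⁻¹
        + (1 / (σ * (1 - a ^ 2))) * (a⁻¹ - ζ ^ j)⁻¹ := by
    intro j _
    set z := ζ ^ j with hzdef
    have hz0 : z ≠ 0 := pow_ne_zero _ (Complex.exp_ne_zero _)
    have hzm : z ^ m = 1 := by rw [hzdef, ← pow_mul, Nat.mul_comm, pow_mul, hζm, one_pow]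
    have hza : a - z ≠ 0 := by
      intro h; exact ham (by rw [sub_eq_zero.mp h, hzm])
    have hzb : a⁻¹ - z ≠ 0 := by
      intro h; exact hbm (by rw [sub_eq_zero.mp h, hzm])
    have hD : 1 + 2 * σ - σ * z - σ * z⁻¹ = -σ * (z - a) * (z - a⁻¹) * z⁻¹ := by
      field_simp
      linear_combination (-z) * hrel
    rw [hD]
    exact partial_frac σ a a⁻¹ z hσ ha21 hza hzb (mul_inv_cancel₀ ha0)
  rw [Finset.sum_congr rfl step, Finset.sum_add_distrib, ← Finset.mul_sum, ← Finset.mul_sum,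
    sum_inv_sub_roots m hm a ham, sum_inv_sub_roots m hm a⁻¹ hbm]
  obtain ⟨n, rfl⟩ : ∃ n, m = n + 1 := ⟨m - 1, by omega⟩
  simp only [Nat.add_sub_cancel]
  have hB : (↑(n+1):ℂ) * (a⁻¹) ^ n / ((a⁻¹) ^ (n+1) - 1)
      = (n+1) * a / (1 - a ^ (n+1)) := by
    rw [inv_pow, inv_pow]
    have h1 : a ^ n ≠ 0 := pow_ne_zero _ ha0
    have h2 : a ^ (n+1) ≠ 0 := pow_ne_zero _ ha0
    have h3 : (1:ℂ) - a ^ (n+1) ≠ 0 := fun h => ham (by linear_combination -h)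
    have h5 : (a ^ (n+1))⁻¹ - 1 ≠ 0 := by
      rw [← inv_pow]; exact sub_ne_zero.mpr hbm
    field_simp
    push_cast
    ring
  rw [hB]
  have h3 : (1:ℂ) - a ^ (n+1) ≠ 0 := fun h => ham (by linear_combination -h)
  have h4 : (1:ℂ) - a ^ 2 ≠ 0 := fun h => ha2 (by linear_combination -h)
  field_simp
  push_cast
  ring

/-- Closed formula for `β_m = (1/m) Σ_{j=1}^m 1/(1 + 2σ - σ z_j - σ conj z_j)` where the
`z_j` are the `m`-th roots of unity: with `α = (2σ+1-√(4σ+1))/(2σ)` one has `0 < α < 1`,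
`β_m = (1+αᵐ)/((1-αᵐ)√(4σ+1))`, and `β_m → 1/√(1+4σ)` as `m → ∞`. -/
theorem stmt2 (σ : ℝ) (hσ : 0 < σ) (α : ℝ)
    (hα : α = (2 * σ + 1 - Real.sqrt (4 * σ + 1)) / (2 * σ))
    (β : ℕ → ℝ)
    (hβ : ∀ m : ℕ, 1 ≤ m → (β m : ℂ) = (1 / (m : ℂ)) * ∑ j : Fin m,
      1 / (1 + 2 * (σ : ℂ) - (σ : ℂ) * Complex.exp (2 * Real.pi * Complex.I * (j : ℕ) / m)
            - (σ : ℂ) * (starRingEnd ℂ) (Complex.exp (2 * Real.pi * Complex.I * (j : ℕ) / m)))) :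
    0 < α ∧ α < 1 ∧
    (∀ m : ℕ, 1 ≤ m → β m = (1 + α ^ m) / ((1 - α ^ m) * Real.sqrt (4 * σ + 1))) ∧
    Tendsto β atTop (nhds (1 / Real.sqrt (1 + 4 * σ))) := by
  set s : ℝ := Real.sqrt (4 * σ + 1) with hsdef
  have hs2 : s ^ 2 = 4 * σ + 1 := Real.sq_sqrt (by linarith)
  have hs0 : 0 < s := Real.sqrt_pos.mpr (by linarith)
  have hs1 : 1 < s := by nlinarith
  have hslt : s < 2 * σ + 1 := by nlinarith
  have hα0 : 0 < α := by
    rw [hα]; exact div_pos (by linarith) (by linarith)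
  have hα1 : α < 1 := by
    rw [hα, div_lt_one (by linarith)]; linarith
  have hσ' : σ ≠ 0 := ne_of_gt hσ
  have hrelR : σ * α ^ 2 - (1 + 2 * σ) * α + σ = 0 := by
    rw [hα]; field_simp; nlinarith [hs2]
  have hsrel : σ * (1 - α ^ 2) = α * s := by
    rw [hα]; field_simp; nlinarith [hs2]
  have formula : ∀ m : ℕ, 1 ≤ m → β m = (1 + α ^ m) / ((1 - α ^ m) * s) := by
    intro m hm
    have hαm1 : α ^ m < 1 := pow_lt_one₀ (le_of_lt hα0) hα1 (by omega)
    have hαm0 : 0 < α ^ m := pow_pos hα0 m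
    have hconv : ∀ j : Fin m,
        (1 : ℂ) / (1 + 2 * (σ : ℂ) - (σ : ℂ) * Complex.exp (2 * Real.pi * Complex.I * (j : ℕ) / m)
            - (σ : ℂ) * (starRingEnd ℂ) (Complex.exp (2 * Real.pi * Complex.I * (j : ℕ) / m)))
        = (1 : ℂ) / (1 + 2 * (σ:ℂ) - (σ:ℂ) * Complex.exp (2 * Real.pi * Complex.I / m) ^ (j:ℕ)
            - (σ:ℂ) * (Complex.exp (2 * Real.pi * Complex.I / m) ^ (j:ℕ))⁻¹) := by
      intro j
      have he : Complex.exp (2 * Real.pi * Complex.I * (j:ℕ) / m)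
          = Complex.exp (2 * Real.pi * Complex.I / m) ^ (j:ℕ) := by
        rw [← Complex.exp_nat_mul]; congr 1; ring
      have hc : (starRingEnd ℂ) (Complex.exp (2 * Real.pi * Complex.I * (j:ℕ) / m))
          = (Complex.exp (2 * Real.pi * Complex.I / m) ^ (j:ℕ))⁻¹ := by
        rw [← Complex.exp_conj]
        rw [show (starRingEnd ℂ) (2 * Real.pi * Complex.I * (j:ℕ) / m)
            = -(2 * Real.pi * Complex.I * (j:ℕ) / m) by
          simp [map_div₀, map_mul, map_ofNat, Complex.conj_I, Complex.conj_ofReal]; ring]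
        rw [Complex.exp_neg, he]
      rw [hc, he]
    have hβm := hβ m hm
    rw [Finset.sum_congr rfl (fun j _ => hconv j)] at hβm
    rw [show (∑ j : Fin m, (1 : ℂ) / (1 + 2 * (σ:ℂ) - (σ:ℂ) * Complex.exp (2 * Real.pi * Complex.I / m) ^ (j:ℕ)
            - (σ:ℂ) * (Complex.exp (2 * Real.pi * Complex.I / m) ^ (j:ℕ))⁻¹))
        = ∑ j ∈ Finset.range m, (1 : ℂ) / (1 + 2 * (σ:ℂ) - (σ:ℂ) * Complex.exp (2 * Real.pi * Complex.I / m) ^ j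
            - (σ:ℂ) * (Complex.exp (2 * Real.pi * Complex.I / m) ^ j)⁻¹)
        from Fin.sum_univ_eq_sum_range (fun j => (1 : ℂ) / (1 + 2 * (σ:ℂ) - (σ:ℂ) * Complex.exp (2 * Real.pi * Complex.I / m) ^ j
            - (σ:ℂ) * (Complex.exp (2 * Real.pi * Complex.I / m) ^ j)⁻¹)) m] at hβm
    have hσC : (σ : ℂ) ≠ 0 := by exact_mod_cast hσ'
    have haC0 : (α : ℂ) ≠ 0 := by exact_mod_cast ne_of_gt hα0
    have ha2C : (α : ℂ) ^ 2 ≠ 1 := by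
      have : α ^ 2 < 1 := pow_lt_one₀ (le_of_lt hα0) hα1 (by omega)
      intro h
      have : ((α ^ 2 : ℝ) : ℂ) = ((1:ℝ):ℂ) := by push_cast; exact h
      exact absurd (Complex.ofReal_inj.mp this) (by linarith)
    have hrelC : (σ:ℂ) * (α:ℂ) ^ 2 - (1 + 2 * (σ:ℂ)) * (α:ℂ) + (σ:ℂ) = 0 := by
      exact_mod_cast hrelR
    have hamC : (α:ℂ) ^ m ≠ 1 := by
      intro h
      have : ((α ^ m : ℝ) : ℂ) = ((1:ℝ):ℂ) := by push_cast; exact h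
      exact absurd (Complex.ofReal_inj.mp this) (by linarith)
    rw [key_sum m hm (σ:ℂ) (α:ℂ) hσC haC0 ha2C hrelC hamC] at hβm
    have hmC : (m : ℂ) ≠ 0 := Nat.cast_ne_zero.mpr (by omega)
    have h1m : (1:ℂ) - (α:ℂ) ^ m ≠ 0 := by
      intro h
      exact hamC (by linear_combination -h)
    have h1a2 : (1:ℂ) - (α:ℂ) ^ 2 ≠ 0 := by
      intro h
      exact ha2C (by linear_combination -h)
    have hsrelC : (σ:ℂ) * (1 - (α:ℂ) ^ 2) = (α:ℂ) * (s:ℂ) := by exact_mod_cast hsrel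
    have hsC : (s : ℂ) ≠ 0 := by exact_mod_cast ne_of_gt hs0
    have target : (β m : ℂ) = (((1 + α ^ m) / ((1 - α ^ m) * s) : ℝ) : ℂ) := by
      rw [hβm]
      push_cast
      field_simp
      linear_combination (-(1 + (α:ℂ)^m)) * hsrelC
    exact_mod_cast target
  refine ⟨hα0, hα1, formula, ?_⟩
  have hlim : Tendsto (fun m : ℕ => (1 + α ^ m) / ((1 - α ^ m) * s)) atTop
      (nhds (1 / Real.sqrt (1 + 4 * σ))) := by
    have hpow : Tendsto (fun m : ℕ => α ^ m) atTop (nhds 0) :=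
      tendsto_pow_atTop_nhds_zero_of_lt_one (le_of_lt hα0) hα1
    have : Tendsto (fun m : ℕ => (1 + α ^ m) / ((1 - α ^ m) * s)) atTop
        (nhds ((1 + 0) / ((1 - 0) * s))) := by
      apply Tendsto.div
      · exact tendsto_const_nhds.add hpow
      · exact (tendsto_const_nhds.sub hpow).mul tendsto_const_nhds
      · simp [ne_of_gt hs0]
    convert this using 2
    rw [hsdef]
    norm_num
    congr 1
    ring
  apply hlim.congr'
  filter_upwards [eventually_ge_atTop 1] with m hm
  exact (formula m hm).symm
end

section
/- Let m ≥ 2n+1, σ ≥ 0, n ≥ 1, and let Σ be an m×m symmetric positive definite matrix with condition number κ = λ_max(Σ)/λ_min(Σ). Then trace( (A_σ^{(n)})^{-1} Σ (A_σ^{(n)})^{-1} ) ≤ trace(Σ) · ( 1 − 1/κ + (1/(κm)) Σ_{j=0}^{m−1} 1/(1 + 4^n σ sin^{2n}(πj/m))² ). Equivalently, if n ∼ N(0, Σ) is an m-dimensional Gaussian random vector, then the sum of coordinate variances of (A_σ^{(n)})^{-1} n divided by the sum of coordinate variances of n is bounded by 1 − 1/κ + (1/(κm)) Σ_{j=0}^{m−1}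 (1 + 4^n σ sin^{2n}(πj/m))^{-2}. -/
open Matrix Complex Finset

/-- The `m × m` periodic forward finite difference matrix `D₊`. -/
noncomputable def Dplus (m : ℕ) [NeZero m] : Matrix (Fin m) (Fin m) ℝ :=
  Matrix.of fun i j => if j = i then -1 else if j = i + 1 then 1 else 0

/-- The periodic backward finite difference matrix `D₋ = -D₊ᵀ`. -/
noncomputable def Dminus (m : ℕ) [NeZero m] : Matrix (Fin m) (Fin m) ℝ := -(Dplus m)ᵀ

/-- The periodic one-dimensional discrete Laplacian `L = D₋ D₊`. -/
noncomputable def Lap (m : ℕ) [NeZero m] : Matrix (Fin m) (Fin m) ℝ := Dminus m * Dplus m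

/-- The Laplacian smoothing matrix `A_σ = I - σ L`. -/
noncomputable def MatA (m : ℕ) [NeZero m] (σ : ℝ) : Matrix (Fin m) (Fin m) ℝ :=
  1 - σ • Lap m

/-- The `n`-th order smoothing matrix `A_σ⁽ⁿ⁾ = I + (-1)ⁿ σ Lⁿ`. -/
noncomputable def MatAn (m : ℕ) [NeZero m] (σ : ℝ) (n : ℕ) : Matrix (Fin m) (Fin m) ℝ :=
  1 + ((-1 : ℝ) ^ n * σ) • Lap m ^ n



variable {m : ℕ}

noncomputable def ww (m : ℕ) : ℂ := Complex.exp (2 * Real.pi * Complex.I / m)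

lemma ww_prim (hm : m ≠ 0) : IsPrimitiveRoot (ww m) m := Complex.isPrimitiveRoot_exp m hm

lemma ww_pow_m (hm : m ≠ 0) : ww m ^ m = 1 := (ww_prim hm).pow_eq_one

lemma ww_ne_zero : ww m ≠ 0 := Complex.exp_ne_zero _

lemma ww_abs : ‖ww m‖ = 1 := by
  simp [ww, Complex.norm_exp, div_eq_mul_inv]

noncomputable def dftM (m : ℕ) : Matrix (Fin m) (Fin m) ℂ :=
  Matrix.of fun i j => ww m ^ ((i : ℕ) * (j : ℕ))

lemma star_ww_pow (a : ℕ) : star (ww m ^ a) = (ww m ^ a)⁻¹ := by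
  rw [show star (ww m ^ a) = (starRingEnd ℂ) (ww m ^ a) from rfl,
    ← Complex.inv_eq_conj (by rw [norm_pow, ww_abs, one_pow])]

lemma dft_mul_conj (hm : m ≠ 0) : dftM m * (dftM m)ᴴ = (m : ℂ) • 1 := by
  ext i j
  simp only [mul_apply, conjTranspose_apply, dftM, of_apply, Matrix.smul_apply, one_apply,
    smul_eq_mul, star_ww_pow]
  have hz : ∀ k : Fin m, ww m ^ ((i : ℕ) * k) * (ww m ^ ((j : ℕ) * k))⁻¹
      = (ww m ^ (i : ℕ) * (ww m ^ (j : ℕ))⁻¹) ^ (k : ℕ) := by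
    intro k
    rw [mul_pow, ← pow_mul, inv_pow, ← pow_mul]
  simp_rw [hz]
  rcases eq_or_ne i j with rfl | hij
  · simp [mul_inv_cancel₀ (pow_ne_zero _ (ww_ne_zero))]
  · rw [if_neg hij]
    have hz1 : ww m ^ (i : ℕ) * (ww m ^ (j : ℕ))⁻¹ ≠ 1 := by
      intro h
      apply hij
      rw [mul_inv_eq_one₀ (pow_ne_zero _ ww_ne_zero)] at h
      exact Fin.ext ((ww_prim hm).pow_inj i.isLt j.isLt h)
    have hzm : (ww m ^ (i : ℕ) * (ww m ^ (j : ℕ))⁻¹) ^ m = 1 := by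
      rw [mul_pow, ← pow_mul, mul_comm (i : ℕ), pow_mul, ww_pow_m hm, one_pow, one_mul,
        inv_pow, ← pow_mul, mul_comm (j : ℕ), pow_mul, ww_pow_m hm, one_pow, inv_one]
    rw [Fin.sum_univ_eq_sum_range (fun k => (ww m ^ (i:ℕ) * (ww m ^ (j:ℕ))⁻¹) ^ k),
      geom_sum_eq hz1, hzm]
    simp

noncomputable def Mre (m : ℕ) [NeZero m] : Matrix (Fin m) (Fin m) ℝ :=
  (Dplus m)ᵀ * Dplus m

section main
variable [NeZero m] (hm2 : 2 ≤ m)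

include hm2 in
lemma fin_succ_ne (i : Fin m) : i + 1 ≠ i := by
  intro h
  have h1 : (1 : Fin m) = 0 := by
    have h' : 1 + i = 0 + i := by rw [add_comm, zero_add]; exact h
    exact add_right_cancel h'
  rw [Fin.one_eq_zero_iff] at h1
  omega

include hm2 in
lemma fin_pred_ne (i : Fin m) : i - 1 ≠ i := by
  intro h
  exact fin_succ_ne hm2 i (by nth_rewrite 1 [← h]; exact sub_add_cancel i 1)

include hm2 in
lemma dplus_mulVec (v : Fin m → ℂ) :
    ((Dplus m).map Complex.ofReal) *ᵥ v = fun i => v (i + 1) - v i := by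
  funext i
  have hne : i + 1 ≠ i := fin_succ_ne hm2 i
  simp only [mulVec, dotProduct, Matrix.map_apply, Dplus, of_apply]
  have hterm : ∀ j : Fin m,
      (Complex.ofReal (if j = i then -1 else if j = i + 1 then 1 else 0)) * v j
      = (if j = i then -v j else 0) + (if j = i + 1 then v j else 0) := by
    intro j
    by_cases h1 : j = i
    · rw [if_pos h1, if_pos h1, if_neg (by rw [h1]; exact (Ne.symm hne)), add_zero]
      push_cast; ring
    · rw [if_neg h1, if_neg h1, zero_add]
      by_cases h2 : j = i + 1
      · rw [if_pos h2, if_pos h2]; push_cast; ring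
      · rw [if_neg h2, if_neg h2]; push_cast; ring
  simp_rw [hterm]
  rw [Finset.sum_add_distrib, Finset.sum_ite_eq' Finset.univ i,
    Finset.sum_ite_eq' Finset.univ (i+1)]
  simp [sub_eq_add_neg, add_comm]

include hm2 in
lemma dplusT_mulVec (v : Fin m → ℂ) :
    ((Dplus m)ᵀ.map Complex.ofReal) *ᵥ v = fun i => v (i - 1) - v i := by
  funext i
  simp only [mulVec, dotProduct, Matrix.map_apply, Dplus, transpose_apply, of_apply]
  have hterm : ∀ j : Fin m,
      (Complex.ofReal (if i = j then -1 else if i = j + 1 then 1 else 0)) * v j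
      = (if j = i then -v j else 0) + (if j = i - 1 then v j else 0) := by
    intro j
    by_cases h1 : j = i
    · subst h1
      rw [if_pos rfl, if_pos rfl, if_neg (Ne.symm (fin_pred_ne hm2 j)), add_zero]
      push_cast; ring
    · rw [if_neg h1, if_neg (fun h => h1 h.symm), zero_add]
      by_cases h2 : i = j + 1
      · rw [if_pos h2, if_pos (by rw [h2]; exact (add_sub_cancel_right j 1).symm)]
        push_cast; ring
      · rw [if_neg h2, if_neg (fun h => h2 (by rw [h]; exact (sub_add_cancel i 1).symm))]
        push_cast; ring
  simp_rw [hterm]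
  rw [Finset.sum_add_distrib, Finset.sum_ite_eq' Finset.univ i,
    Finset.sum_ite_eq' Finset.univ (i-1)]
  simp [sub_eq_add_neg, add_comm]
end main

section eig
variable [NeZero m] (hm2 : 2 ≤ m)

noncomputable def vv (m : ℕ) (j : Fin m) : Fin m → ℂ := fun k => ww m ^ ((j : ℕ) * (k : ℕ))

noncomputable def muC (m : ℕ) (j : Fin m) : ℂ :=
  2 - ww m ^ (j : ℕ) - (ww m ^ (j : ℕ))⁻¹

lemma vv_add_one (j k : Fin m) : vv m j (k + 1) = ww m ^ (j : ℕ) * vv m j k := by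
  have hm : m ≠ 0 := NeZero.ne m
  simp only [vv]
  have h1 : ((k + 1 : Fin m) : ℕ) = ((k : ℕ) + 1) % m := by
    rw [Fin.add_def]; simp
  rw [h1, mul_comm (j : ℕ), pow_mul, ← pow_eq_pow_mod _ (ww_pow_m hm), ← pow_mul,
    add_mul, one_mul, pow_add, mul_comm (j : ℕ) (k : ℕ)]
  ring

lemma vv_sub_one (j k : Fin m) : vv m j (k - 1) = (ww m ^ (j : ℕ))⁻¹ * vv m j k := by
  have h := vv_add_one (j := j) (k := k - 1)
  rw [sub_add_cancel] at h
  rw [h, ← mul_assoc, inv_mul_cancel₀ (pow_ne_zero _ ww_ne_zero), one_mul]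

include hm2 in
lemma mre_mulVec (j : Fin m) :
    ((Mre m).map Complex.ofReal) *ᵥ vv m j = muC m j • vv m j := by
  have hmap : ((Mre m).map Complex.ofReal)
      = ((Dplus m)ᵀ.map Complex.ofReal) * ((Dplus m).map Complex.ofReal) := by
    rw [Mre, show (Complex.ofReal : ℝ → ℂ) = ⇑Complex.ofRealHom from rfl]
    exact Matrix.map_mul (L := (Dplus m)ᵀ) (M := Dplus m) (f := Complex.ofRealHom)
  rw [hmap, ← mulVec_mulVec, dplus_mulVec hm2, ]
  funext i
  rw [dplusT_mulVec hm2]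
  simp only [Pi.smul_apply, smul_eq_mul, muC]
  rw [vv_add_one, vv_sub_one, vv_add_one]
  have ha : ww m ^ (j : ℕ) ≠ 0 := pow_ne_zero _ ww_ne_zero
  field_simp
  ring

include hm2 in
lemma mre_pow_mulVec (n : ℕ) (j : Fin m) :
    (((Mre m).map Complex.ofReal) ^ n) *ᵥ vv m j = (muC m j ^ n) • vv m j := by
  induction n with
  | zero => simp
  | succ n ih =>
    rw [pow_succ, ← mulVec_mulVec, mre_mulVec hm2, mulVec_smul, ih, smul_smul, pow_succ]
    ring_nf

lemma matAn_eq (σ : ℝ) (n : ℕ) : MatAn m σ n = 1 + σ • Mre m ^ n := by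
  have hlap : Lap m = (-1 : ℝ) • Mre m := by
    rw [Lap, Dminus, Mre, neg_mul]; simp
  rw [MatAn, hlap, smul_pow, smul_smul]
  congr 1
  rw [mul_comm ((-1:ℝ)^n), mul_assoc, ← pow_add]
  have : (-1 : ℝ) ^ (n + n) = 1 := by
    rw [← two_mul, pow_mul]; norm_num
  rw [this, mul_one]

noncomputable def lamC (m : ℕ) (σ : ℝ) (n : ℕ) (j : Fin m) : ℂ := 1 + (σ : ℂ) * muC m j ^ n

include hm2 in
lemma matAn_mulVec (σ : ℝ) (n : ℕ) (j : Fin m) :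
    ((MatAn m σ n).map Complex.ofReal) *ᵥ vv m j = lamC m σ n j • vv m j := by
  have hmap : (MatAn m σ n).map Complex.ofReal
      = 1 + (σ : ℂ) • ((Mre m).map Complex.ofReal) ^ n := by
    have hpow : (Mre m ^ n).map Complex.ofReal = ((Mre m).map Complex.ofReal) ^ n := by
      exact map_pow (Complex.ofRealHom.mapMatrix) (Mre m) n
    rw [matAn_eq, ← hpow]
    ext i k
    simp only [Matrix.map_apply, Matrix.add_apply, Matrix.smul_apply, Matrix.one_apply,
      smul_eq_mul]
    split_ifs <;> push_cast <;> ring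
  rw [hmap, add_mulVec, one_mulVec, smul_mulVec, mre_pow_mulVec hm2]
  funext i
  simp only [Pi.add_apply, Pi.smul_apply, smul_eq_mul, lamC]
  ring

end eig

section spec
variable [NeZero m] (hm2 : 2 ≤ m)

noncomputable def lamR (m : ℕ) (σ : ℝ) (n : ℕ) (j : ℕ) : ℝ :=
  1 + 4 ^ n * σ * Real.sin (Real.pi * j / m) ^ (2 * n)

lemma muC_real (j : Fin m) :
    muC m j = ((4 * Real.sin (Real.pi * j / m) ^ 2 : ℝ) : ℂ) := by
  set x : ℝ := Real.pi * (j : ℝ) / m with hx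
  have h1 : ww m ^ (j : ℕ) = Complex.exp (((2 * x : ℝ) : ℂ) * Complex.I) := by
    rw [ww, ← Complex.exp_nat_mul]
    congr 1
    push_cast [hx]
    have hm0 : (m : ℂ) ≠ 0 := Nat.cast_ne_zero.mpr (NeZero.ne m)
    field_simp
  have h2 : (ww m ^ (j : ℕ))⁻¹ = Complex.exp (-(((2 * x : ℝ) : ℂ) * Complex.I)) := by
    rw [h1, ← Complex.exp_neg]
  rw [muC, h2, h1, ← neg_mul, Complex.exp_mul_I, Complex.exp_mul_I,
    Complex.cos_neg, Complex.sin_neg, ← Complex.ofReal_cos, ← Complex.ofReal_sin]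
  have hcos : Real.cos (2 * x) = 1 - 2 * Real.sin x ^ 2 := by
    have h3 := Real.cos_two_mul x
    have h4 := Real.sin_sq_add_cos_sq x
    linarith
  rw [hcos]
  push_cast
  ring

lemma lamC_eq (σ : ℝ) (n : ℕ) (j : Fin m) :
    lamC m σ n j = ((lamR m σ n (j : ℕ) : ℝ) : ℂ) := by
  rw [lamC, muC_real, lamR]
  have : (4 * Real.sin (Real.pi * (j:ℝ) / m) ^ 2) ^ n
      = 4 ^ n * Real.sin (Real.pi * (j:ℝ) / m) ^ (2 * n) := by
    rw [mul_pow, ← pow_mul]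
  push_cast [this]
  ring

lemma lamR_ge_one (σ : ℝ) (hσ : 0 ≤ σ) (n : ℕ) (j : ℕ) : 1 ≤ lamR m σ n j := by
  rw [lamR]
  have h1 : (0:ℝ) ≤ Real.sin (Real.pi * j / m) ^ (2 * n) := by
    rw [pow_mul]; positivity
  have h2 : (0:ℝ) ≤ 4 ^ n * σ * Real.sin (Real.pi * j / m) ^ (2 * n) :=
    mul_nonneg (mul_nonneg (le_of_lt (pow_pos (by norm_num) n)) hσ) h1
  linarith

lemma lamR_pos (σ : ℝ) (hσ : 0 ≤ σ) (n : ℕ) (j : ℕ) : 0 < lamR m σ n j :=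
  lt_of_lt_of_le one_pos (lamR_ge_one σ hσ n j)

lemma lamC_ne (σ : ℝ) (hσ : 0 ≤ σ) (n : ℕ) (j : Fin m) : lamC m σ n j ≠ 0 := by
  rw [lamC_eq]
  exact_mod_cast (lamR_pos σ hσ n (j : ℕ)).ne'

include hm2 in
lemma BU_eq (σ : ℝ) (n : ℕ) :
    ((MatAn m σ n).map Complex.ofReal) * dftM m = dftM m * diagonal (lamC m σ n) := by
  ext i k
  have h1 : (((MatAn m σ n).map Complex.ofReal) * dftM m) i k
      = (((MatAn m σ n).map Complex.ofReal) *ᵥ vv m k) i := by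
    simp only [mul_apply, mulVec, dotProduct, dftM, of_apply, vv]
    congr 1
    funext l
    rw [mul_comm (l : ℕ) (k : ℕ)]
  rw [h1, matAn_mulVec hm2, Matrix.mul_diagonal]
  simp only [Pi.smul_apply, smul_eq_mul, dftM, of_apply, vv]
  rw [mul_comm (i : ℕ) (k : ℕ)]
  ring

lemma matAn_posDef (σ : ℝ) (hσ : 0 ≤ σ) (n : ℕ) : (MatAn m σ n).PosDef := by
  rw [matAn_eq]
  refine Matrix.PosDef.add_posSemidef Matrix.PosDef.one ?_
  have hM : (Mre m).PosSemidef := by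
    have h := Matrix.posSemidef_conjTranspose_mul_self (Dplus m)
    have he : (Dplus m)ᴴ = (Dplus m)ᵀ := by
      ext i j; simp [conjTranspose_apply]
    rw [he] at h
    exact h
  have hMn := hM.pow n
  refine Matrix.PosSemidef.of_dotProduct_mulVec_nonneg ?_ fun x => ?_
  · rw [Matrix.IsHermitian, conjTranspose_smul, star_trivial, hMn.1]
  · rw [smul_mulVec, dotProduct_smul, smul_eq_mul]
    exact mul_nonneg hσ (hMn.dotProduct_mulVec_nonneg x)

include hm2 in
lemma trace_inv_sq (σ : ℝ) (hσ : 0 ≤ σ) (n : ℕ) :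
    ((MatAn m σ n)⁻¹ * (MatAn m σ n)⁻¹).trace
      = ∑ j ∈ Finset.range m, 1 / (lamR m σ n j) ^ 2 := by
  have hm0 : m ≠ 0 := NeZero.ne m
  have hm0C : (m : ℂ) ≠ 0 := Nat.cast_ne_zero.mpr hm0
  set A := MatAn m σ n with hA
  set BC := A.map Complex.ofReal with hBC
  set U := dftM m with hU
  set W := ((m : ℂ)⁻¹) • Uᴴ with hW
  set D := diagonal (lamC m σ n) with hD
  set Dinv := diagonal (fun j => (lamC m σ n j)⁻¹) with hDinv
  have hUW : U * W = 1 := by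
    rw [hW, Matrix.mul_smul, hU, dft_mul_conj hm0, smul_smul, inv_mul_cancel₀ hm0C, one_smul]
  have hWU : W * U = 1 := mul_eq_one_comm.mp hUW
  have hDD : D * Dinv = 1 := by
    have : (fun j => lamC m σ n j * (lamC m σ n j)⁻¹) = fun _ => (1:ℂ) :=
      funext fun j => mul_inv_cancel₀ (lamC_ne σ hσ n j)
    rw [hD, hDinv, diagonal_mul_diagonal, this, diagonal_one]
  have hBU : BC * U = U * D := BU_eq hm2 σ n
  have key : BC * (U * Dinv * W) = 1 := by
    rw [← Matrix.mul_assoc BC, ← Matrix.mul_assoc BC, hBU,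
      Matrix.mul_assoc U D Dinv, hDD, Matrix.mul_one, hUW]
  have hBinv : BC⁻¹ = U * Dinv * W := Matrix.inv_eq_right_inv key
  -- real inverse maps to complex inverse
  have hAunit : IsUnit A.det := (matAn_posDef σ hσ n).det_pos.ne'.isUnit
  have hA1 : A * A⁻¹ = 1 := Matrix.mul_nonsing_inv A hAunit
  have hmapmul : ∀ (X Y : Matrix (Fin m) (Fin m) ℝ),
      (X * Y).map Complex.ofReal = X.map Complex.ofReal * Y.map Complex.ofReal := by
    intro X Y
    rw [show (Complex.ofReal : ℝ → ℂ) = ⇑Complex.ofRealHom from rfl]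
    exact Matrix.map_mul
  have hmap1 : BC * (A⁻¹.map Complex.ofReal) = 1 := by
    rw [hBC, ← hmapmul, hA1, Matrix.map_one _ Complex.ofReal_zero Complex.ofReal_one]
  have hAinvmap : A⁻¹.map Complex.ofReal = BC⁻¹ := (Matrix.inv_eq_right_inv hmap1).symm
  -- compute trace of BC⁻¹ * BC⁻¹
  have hsq : BC⁻¹ * BC⁻¹ = U * (Dinv * Dinv) * W := by
    rw [hBinv]
    calc U * Dinv * W * (U * Dinv * W) = U * Dinv * (W * U) * Dinv * W := by
          simp only [Matrix.mul_assoc]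
      _ = U * (Dinv * Dinv) * W := by rw [hWU, Matrix.mul_one]; simp only [Matrix.mul_assoc]
  have htraceC : (BC⁻¹ * BC⁻¹).trace = ∑ j : Fin m, ((lamC m σ n j)⁻¹ * (lamC m σ n j)⁻¹) := by
    rw [hsq, Matrix.trace_mul_cycle, ← Matrix.mul_assoc, hWU, Matrix.one_mul, hDinv,
      diagonal_mul_diagonal, trace_diagonal]
  -- transfer to ℝ
  have htrmap : ((A⁻¹ * A⁻¹).map Complex.ofReal).trace = ((A⁻¹ * A⁻¹).trace : ℂ) := by
    simp only [Matrix.trace, Matrix.diag, Matrix.map_apply]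
    push_cast
    ring
  have : ((A⁻¹ * A⁻¹).trace : ℂ) = ((∑ j ∈ Finset.range m, 1 / (lamR m σ n j) ^ 2 : ℝ) : ℂ) := by
    rw [← htrmap, hmapmul, hAinvmap, htraceC]
    have hterm : ∀ j : Fin m, (lamC m σ n j)⁻¹ * (lamC m σ n j)⁻¹
        = ((1 / (lamR m σ n (j : ℕ)) ^ 2 : ℝ) : ℂ) := by
      intro j
      rw [lamC_eq, ← Complex.ofReal_inv, ← Complex.ofReal_mul]
      congr 1
      rw [one_div, sq, mul_inv]
    simp_rw [hterm]
    rw [← Complex.ofReal_sum]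
    congr 1
    exact Fin.sum_univ_eq_sum_range (fun j => 1 / (lamR m σ n j) ^ 2) m
  exact_mod_cast this

end spec

section ineq
variable [NeZero m]

lemma trace_mul_diagonal' (X : Matrix (Fin m) (Fin m) ℝ) (d : Fin m → ℝ) :
    (X * diagonal d).trace = ∑ i, X i i * d i := by
  simp [Matrix.trace, Matrix.diag, Matrix.mul_diagonal]

lemma psd_diag_nonneg {X : Matrix (Fin m) (Fin m) ℝ} (hX : X.PosSemidef) (i : Fin m) :
    0 ≤ X i i := by
  exact hX.diag_nonneg

lemma smul_psd {X : Matrix (Fin m) (Fin m) ℝ} (hX : X.PosSemidef) {c : ℝ} (hc : 0 ≤ c) :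
    (c • X).PosSemidef := by
  refine Matrix.PosSemidef.of_dotProduct_mulVec_nonneg ?_ fun x => ?_
  · rw [Matrix.IsHermitian, conjTranspose_smul, star_trivial, hX.1]
  · rw [smul_mulVec, dotProduct_smul, smul_eq_mul]
    exact mul_nonneg hc (hX.dotProduct_mulVec_nonneg x)

theorem stmt3' (n : ℕ) (hn : 1 ≤ n) (hm : 2 * n + 1 ≤ m)
    (σ : ℝ) (hσ : 0 ≤ σ)
    (S : Matrix (Fin m) (Fin m) ℝ) (hS : S.PosDef)
    (κ : ℝ) (hκ : κ = (⨆ i, hS.1.eigenvalues i) / (⨅ i, hS.1.eigenvalues i)) :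
    ((MatAn m σ n)⁻¹ * S * (MatAn m σ n)⁻¹).trace ≤
      S.trace * (1 - 1 / κ + (1 / (κ * m)) * ∑ j ∈ Finset.range m,
        1 / (1 + 4 ^ n * σ * Real.sin (Real.pi * j / m) ^ (2 * n)) ^ 2) := by
  have hm2 : 2 ≤ m := by omega
  set A := MatAn m σ n with hA
  have hApd : A.PosDef := matAn_posDef σ hσ n
  have hAunit : IsUnit A.det := hApd.det_pos.ne'.isUnit
  have hA1 : A * A⁻¹ = 1 := Matrix.mul_nonsing_inv A hAunit
  have hA1' : A⁻¹ * A = 1 := Matrix.nonsing_inv_mul A hAunit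
  have hAinvPD : A⁻¹.PosDef := hApd.inv
  set P := A⁻¹ * A⁻¹ with hPdef
  have hP : P.PosSemidef := by
    have h := Matrix.posSemidef_conjTranspose_mul_self (A⁻¹)
    rwa [show (A⁻¹)ᴴ = A⁻¹ from hAinvPD.1] at h
  -- 1 - P is PSD
  have hexp : A * A = 1 + (2*σ) • Mre m ^ n + (σ*σ) • (Mre m ^ n * Mre m ^ n) := by
    rw [hA, matAn_eq]
    simp only [add_mul, mul_add, one_mul, mul_one, smul_mul_assoc, mul_smul_comm, smul_smul]
    module
  have hMrePsd : (Mre m).PosSemidef := by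
    have h := Matrix.posSemidef_conjTranspose_mul_self (Dplus m)
    have he : (Dplus m)ᴴ = (Dplus m)ᵀ := by ext i j; simp [conjTranspose_apply]
    rw [he] at h
    exact h
  have hC : (A * A - 1).PosSemidef := by
    have h2 : A * A - 1 = (2*σ) • Mre m ^ n + (σ*σ) • (Mre m ^ n * Mre m ^ n) := by
      rw [hexp]; abel
    rw [h2]
    refine Matrix.PosSemidef.add (smul_psd (hMrePsd.pow n) (by linarith)) ?_
    have h3 : Mre m ^ n * Mre m ^ n = (Mre m ^ n)ᴴ * Mre m ^ n := by
      rw [(hMrePsd.pow n).1]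
    exact smul_psd (h3 ▸ Matrix.posSemidef_conjTranspose_mul_self (Mre m ^ n))
      (mul_nonneg hσ hσ)
  have h1P : (1 - P).PosSemidef := by
    have e1 : A⁻¹ * (A * A) * A⁻¹ = 1 := by
      rw [← Matrix.mul_assoc, hA1', Matrix.one_mul, hA1]
    have e2 : 1 - P = (A⁻¹)ᴴ * (A * A - 1) * A⁻¹ := by
      rw [show (A⁻¹)ᴴ = A⁻¹ from hAinvPD.1, Matrix.mul_sub, Matrix.mul_one, Matrix.sub_mul,
        e1, ← hPdef]
    rw [e2]
    exact hC.conjTranspose_mul_mul_same (A⁻¹)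
  -- spectral decomposition of S
  have hH : S.IsHermitian := hS.1
  set V : Matrix (Fin m) (Fin m) ℝ := (hH.eigenvectorUnitary : Matrix (Fin m) (Fin m) ℝ) with hV
  set ev : Fin m → ℝ := hH.eigenvalues with hev
  have hVmem := hH.eigenvectorUnitary.2
  rw [Unitary.mem_iff] at hVmem
  have hV1 : star V * V = 1 := hVmem.1
  have hV2 : V * star V = 1 := hVmem.2
  have hspec : S = V * diagonal ev * star V := by
    have h := hH.spectral_theorem
    simpa using h
  set q : Fin m → ℝ := fun i => (star V * P * V) i i with hq
  have hstar : Vᴴ = star V := (Matrix.star_eq_conjTranspose V).symm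
  have hq0 : ∀ i, 0 ≤ q i := fun i => by
    have h := hP.conjTranspose_mul_mul_same V
    rw [hstar] at h
    exact psd_diag_nonneg h i
  have hq1 : ∀ i, q i ≤ 1 := by
    intro i
    have hpsd := h1P.conjTranspose_mul_mul_same V
    rw [hstar] at hpsd
    have he : star V * (1 - P) * V = 1 - star V * P * V := by
      rw [Matrix.mul_sub, Matrix.mul_one, Matrix.sub_mul, hV1]
    rw [he] at hpsd
    have := psd_diag_nonneg hpsd i
    simp only [Matrix.sub_apply, Matrix.one_apply_eq] at this
    linarith [this]
  have hsumq : ∑ i, q i = P.trace := by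
    have : (star V * P * V).trace = P.trace := by
      rw [Matrix.trace_mul_cycle, ← Matrix.mul_assoc, hV2, Matrix.one_mul]
    rw [← this]
    rfl
  -- trace identities
  have hLHS : (A⁻¹ * S * A⁻¹).trace = ∑ i, q i * ev i := by
    rw [Matrix.trace_mul_cycle, ← hPdef, hspec]
    have : P * (V * diagonal ev * star V) = (P * V * diagonal ev) * star V := by
      simp only [Matrix.mul_assoc]
    rw [this, Matrix.trace_mul_comm, ← Matrix.mul_assoc, ← Matrix.mul_assoc,
      trace_mul_diagonal']
  have htrS : S.trace = ∑ i, ev i := by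
    rw [hspec, Matrix.trace_mul_cycle, hV1, Matrix.one_mul, trace_diagonal]
  -- eigenvalue bounds
  set em : ℝ := ⨅ i, ev i with hem
  set ex : ℝ := ⨆ i, ev i with hex
  have hfinb : BddBelow (Set.range ev) := Set.Finite.bddBelow (Set.finite_range ev)
  have hfina : BddAbove (Set.range ev) := Set.Finite.bddAbove (Set.finite_range ev)
  have hemle : ∀ i, em ≤ ev i := fun i => ciInf_le hfinb i
  have hexge : ∀ i, ev i ≤ ex := fun i => le_ciSup hfina i
  have hevpos : ∀ i, 0 < ev i := fun i => hS.eigenvalues_pos i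
  have hmpos : (0:ℝ) < m := by exact_mod_cast Nat.pos_of_ne_zero (NeZero.ne m)
  have hempos : 0 < em := by
    have hne : Nonempty (Fin m) := Fin.pos_iff_nonempty.mp (Nat.pos_of_ne_zero (NeZero.ne m))
    obtain ⟨i0⟩ := hne
    obtain ⟨i1, hi1⟩ := Finite.exists_min ev
    have : ev i1 ≤ em := le_ciInf hi1
    linarith [hevpos i1, this, hemle i1]
  have hexpos : 0 < ex := lt_of_lt_of_le (hevpos (Classical.arbitrary _)) (hexge _)
  have hκpos : 0 < κ := by rw [hκ]; positivity
  have hκem : κ * em = ex := by rw [hκ]; field_simp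
  -- T facts
  set T : ℝ := P.trace with hT
  have hTval : T = ∑ j ∈ Finset.range m, 1 / (lamR m σ n j) ^ 2 := trace_inv_sq hm2 σ hσ n
  have hTle : T ≤ m := by
    rw [hTval]
    calc ∑ j ∈ Finset.range m, 1 / (lamR m σ n j) ^ 2
        ≤ ∑ _j ∈ Finset.range m, (1:ℝ) := by
          refine Finset.sum_le_sum fun j _ => ?_
          have hl := lamR_ge_one (m := m) σ hσ n j
          have hl2 : (0:ℝ) < lamR m σ n j ^ 2 := by positivity
          rw [div_le_one hl2]
          nlinarith
      _ = m := by simp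
  have hTge : 0 ≤ T := by
    rw [← hsumq]; exact Finset.sum_nonneg fun i _ => hq0 i
  -- main estimate
  have hstep1 : ∑ i, q i * ev i ≤ S.trace - em * ((m : ℝ) - T) := by
    have h1 : ∀ i, q i * ev i = ev i - ev i * (1 - q i) := fun i => by ring
    have h2 : ∀ i, em * (1 - q i) ≤ ev i * (1 - q i) := fun i =>
      mul_le_mul_of_nonneg_right (hemle i) (by linarith [hq1 i])
    have h3 : ∑ i, em * (1 - q i) = em * ((m:ℝ) - T) := by
      rw [← Finset.mul_sum]
      congr 1
      rw [Finset.sum_sub_distrib, hsumq]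
      simp
    calc ∑ i, q i * ev i = ∑ i, (ev i - ev i * (1 - q i)) := by simp_rw [h1]
      _ = ∑ i, ev i - ∑ i, ev i * (1 - q i) := Finset.sum_sub_distrib _ _
      _ ≤ ∑ i, ev i - ∑ i, em * (1 - q i) := by
          have := Finset.sum_le_sum (fun i (_ : i ∈ Finset.univ) => h2 i)
          linarith
      _ = S.trace - em * ((m:ℝ) - T) := by rw [h3, htrS]
  -- compare with RHS
  have htrSpos : 0 < S.trace := by
    rw [htrS]
    exact Finset.sum_pos (fun i _ => hevpos i) Finset.univ_nonempty
  have htrSle : S.trace ≤ m * ex := by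
    rw [htrS]
    calc ∑ i, ev i ≤ ∑ _i : Fin m, ex := Finset.sum_le_sum fun i _ => hexge i
      _ = m * ex := by simp [mul_comm]
  have hkey : S.trace / (κ * m) ≤ em := by
    rw [div_le_iff₀ (by positivity)]
    calc S.trace ≤ m * ex := htrSle
      _ = em * (κ * m) := by rw [← hκem]; ring
  have hRHS : S.trace * (1 - 1 / κ + (1 / (κ * m)) * T)
      = S.trace - (S.trace / (κ * m)) * ((m:ℝ) - T) := by
    field_simp
    ring
  have hsum_eq : ∑ j ∈ Finset.range m,
      1 / (1 + 4 ^ n * σ * Real.sin (Real.pi * j / m) ^ (2 * n)) ^ 2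
      = ∑ j ∈ Finset.range m, 1 / (lamR m σ n j) ^ 2 := by
    refine Finset.sum_congr rfl fun j _ => ?_
    rw [lamR]
  rw [hsum_eq, ← hTval, hLHS, hRHS]
  have hfinal : (S.trace / (κ * m)) * ((m:ℝ) - T) ≤ em * ((m:ℝ) - T) :=
    mul_le_mul_of_nonneg_right hkey (by linarith)
  linarith [hstep1]

end ineq

/-- Variance reduction: if `Σ` is symmetric positive definite with condition number
`κ = λ_max(Σ)/λ_min(Σ)`, then
`trace((A_σ⁽ⁿ⁾)⁻¹ Σ (A_σ⁽ⁿ⁾)⁻¹) ≤ trace(Σ)·(1 - 1/κ + (1/(κm)) Σ_j (1 + 4ⁿσ sin²ⁿ(πj/m))⁻²)`. -/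
theorem stmt3 (m n : ℕ) [NeZero m] (hn : 1 ≤ n) (hm : 2 * n + 1 ≤ m)
    (σ : ℝ) (hσ : 0 ≤ σ)
    (S : Matrix (Fin m) (Fin m) ℝ) (hS : S.PosDef)
    (κ : ℝ) (hκ : κ = (⨆ i, hS.1.eigenvalues i) / (⨅ i, hS.1.eigenvalues i)) :
    ((MatAn m σ n)⁻¹ * S * (MatAn m σ n)⁻¹).trace ≤
      S.trace * (1 - 1 / κ + (1 / (κ * m)) * ∑ j ∈ Finset.range m,
        1 / (1 + 4 ^ n * σ * Real.sin (Real.pi * j / m) ^ (2 * n)) ^ 2) :=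
  stmt3' n hn hm σ hσ S hS κ hκ
end

section
/- Let m ≥ 1, σ ≥ 0, g ∈ ℝ^m and d = A_σ^{-1} g. Then for any p ∈ ℕ, ‖D₊^p d‖₁ ≤ ‖D₊^p g‖₁, where ‖·‖₁ is the ℓ₁ norm on ℝ^m. -/
open Matrix

/- ### Auxiliary lemmas -/

lemma fin_one_ne_zero {m : ℕ} [NeZero m] (h2 : 1 < m) : (1 : Fin m) ≠ 0 := by
  intro he
  simp [Fin.ext_iff, Fin.val_one'] at he
  omega

lemma Dplus_eq_circulant (m : ℕ) [NeZero m] :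
    Dplus m = Matrix.circulant (fun k : Fin m => if k = 0 then -1 else if k = -1 then 1 else 0) := by
  ext i j
  have h1 : (j = i) ↔ (i - j = 0) := by rw [sub_eq_zero, eq_comm]
  have h2 : (j = i + 1) ↔ (i - j = -1) := by
    rw [sub_eq_iff_eq_add, neg_add_eq_sub, eq_sub_iff_add_eq, eq_comm]
  simp only [Dplus, Matrix.of_apply, Matrix.circulant_apply, h1, h2]

lemma commute_Dplus_MatA (m : ℕ) [NeZero m] (σ : ℝ) :
    Commute (Dplus m) (MatA m σ) := by
  have hD : Commute (Dplus m) (Dplus m)ᵀ := by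
    rw [Dplus_eq_circulant, Matrix.transpose_circulant]
    exact Matrix.circulant_mul_comm _ _
  have hL : Commute (Dplus m) (Lap m) := by
    unfold Lap Dminus
    exact (hD.neg_right).mul_right (Commute.refl _)
  unfold MatA
  exact (Commute.one_right _).sub_right (hL.smul_right σ)

lemma matA_posDef (m : ℕ) [NeZero m] {σ : ℝ} (hσ : 0 ≤ σ) : (MatA m σ).PosDef := by
  have h : MatA m σ = 1 + σ • ((Dplus m)ᴴ * Dplus m) := by
    unfold MatA Lap Dminus
    rw [Matrix.conjTranspose_eq_transpose_of_trivial]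
    simp [smul_neg, sub_eq_add_neg, neg_mul]
  rw [h]
  refine Matrix.PosDef.add_posSemidef Matrix.PosDef.one ?_
  have hps := Matrix.posSemidef_conjTranspose_mul_self (Dplus m)
  refine ⟨?_, fun x => ?_⟩
  · unfold Matrix.IsHermitian
    rw [Matrix.conjTranspose_smul]
    simp [hps.1.eq]
  · exact (hps.smul hσ).2 x

lemma Dplus_mulVec {m : ℕ} [NeZero m] (h2 : 1 < m) (x : Fin m → ℝ) (i : Fin m) :
    (Dplus m *ᵥ x) i = x (i + 1) - x i := by
  have hne : (i + 1 : Fin m) ≠ i := fun h =>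
    fin_one_ne_zero h2 (add_eq_left.mp h)
  classical
  have key : ∀ j : Fin m, (if j = i then (-1 : ℝ) else if j = i + 1 then 1 else 0) * x j
      = (if j = i + 1 then x j else 0) - (if j = i then x j else 0) := by
    intro j
    by_cases hj : j = i
    · have h3 : ¬ (i : Fin m) = i + 1 := fun h => hne h.symm
      simp only [hj, if_pos rfl, if_neg h3, if_true]
      ring
    · by_cases hj' : j = i + 1
      · simp only [if_neg hj, if_pos hj']
        ring
      · simp only [if_neg hj, if_neg hj']
        ring
  simp only [Matrix.mulVec, dotProduct, Dplus, Matrix.of_apply, key,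
    Finset.sum_sub_distrib, Finset.sum_ite_eq', Finset.mem_univ, if_true]

lemma DplusT_mulVec {m : ℕ} [NeZero m] (h2 : 1 < m) (y : Fin m → ℝ) (i : Fin m) :
    ((Dplus m)ᵀ *ᵥ y) i = y (i - 1) - y i := by
  have hne : (i - 1 : Fin m) ≠ i := fun h =>
    fin_one_ne_zero h2 (sub_eq_self.mp h)
  classical
  have hii : ¬ (i : Fin m) = i + 1 := fun h =>
    fin_one_ne_zero h2 (add_eq_left.mp h.symm)
  have key : ∀ j : Fin m, (if i = j then (-1 : ℝ) else if i = j + 1 then 1 else 0) * y j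
      = (if j = i - 1 then y j else 0) - (if j = i then y j else 0) := by
    intro j
    by_cases hj : j = i
    · have h4 : ¬ (i : Fin m) = i - 1 := fun h => hne h.symm
      simp only [hj, if_pos rfl, if_neg hii, if_neg h4, if_true]
      ring
    · by_cases hj' : j = i - 1
      · have hcan : (i - 1 : Fin m) + 1 = i := sub_add_cancel i 1
        simp only [if_neg (show ¬ i = j from fun h => hj h.symm),
          if_pos (show i = j + 1 by rw [hj', hcan]),
          if_pos hj', if_neg hj]
        ring
      · simp only [if_neg (show ¬ i = j from fun h => hj h.symm),
          if_neg (show ¬ i = j + 1 from fun h =>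
            hj' (by rw [h]; exact (add_sub_cancel_right j 1).symm)),
          if_neg hj', if_neg hj]
        ring
  simp only [Matrix.mulVec, dotProduct, Matrix.transpose_apply, Dplus, Matrix.of_apply, key,
    Finset.sum_sub_distrib, Finset.sum_ite_eq', Finset.mem_univ, if_true]

lemma matA_mulVec_apply {m : ℕ} [NeZero m] (h2 : 1 < m) (σ : ℝ) (v : Fin m → ℝ) (i : Fin m) :
    (MatA m σ *ᵥ v) i = (1 + 2 * σ) * v i - σ * v (i + 1) - σ * v (i - 1) := by
  have hL : (Lap m *ᵥ v) i = (v (i + 1) - v i) - (v ((i - 1) + 1) - v (i - 1)) := by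
    unfold Lap Dminus
    rw [show (-(Dplus m)ᵀ * Dplus m) *ᵥ v = (-(Dplus m)ᵀ) *ᵥ (Dplus m *ᵥ v) from
      (Matrix.mulVec_mulVec _ _ _).symm, Matrix.neg_mulVec]
    have := DplusT_mulVec h2 (Dplus m *ᵥ v) i
    simp only [Pi.neg_apply, this, Dplus_mulVec h2 v]
    ring
  unfold MatA
  rw [Matrix.sub_mulVec, Matrix.one_mulVec]
  simp only [Pi.sub_apply, Matrix.smul_mulVec, Pi.smul_apply, smul_eq_mul, hL,
    sub_add_cancel]
  ring

lemma l1_contraction (m : ℕ) [NeZero m] {σ : ℝ} (hσ : 0 ≤ σ) (v : Fin m → ℝ) :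
    ∑ i, |v i| ≤ ∑ i, |(MatA m σ *ᵥ v) i| := by
  rcases lt_or_ge 1 m with h2 | h1
  · -- m ≥ 2
    have key : ∀ i : Fin m, (1 + 2 * σ) * |v i|
        ≤ |(MatA m σ *ᵥ v) i| + σ * |v (i + 1)| + σ * |v (i - 1)| := by
      intro i
      have h := matA_mulVec_apply h2 σ v i
      have : (1 + 2 * σ) * v i = (MatA m σ *ᵥ v) i + σ * v (i + 1) + σ * v (i - 1) := by
        rw [h]; ring
      have h12 : (0 : ℝ) ≤ 1 + 2 * σ := by linarith
      calc (1 + 2 * σ) * |v i| = |(1 + 2 * σ) * v i| := by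
              rw [abs_mul, abs_of_nonneg h12]
        _ = |(MatA m σ *ᵥ v) i + σ * v (i + 1) + σ * v (i - 1)| := by rw [this]
        _ ≤ |(MatA m σ *ᵥ v) i| + |σ * v (i + 1)| + |σ * v (i - 1)| :=
              (abs_add_le _ _).trans (by gcongr; exact abs_add_le _ _)
        _ = |(MatA m σ *ᵥ v) i| + σ * |v (i + 1)| + σ * |v (i - 1)| := by
              rw [abs_mul, abs_mul, abs_of_nonneg hσ]
    have hsum := Finset.sum_le_sum (fun i (_ : i ∈ Finset.univ) => key i)
    have e1 : ∑ i : Fin m, |v (i + 1)| = ∑ i : Fin m, |v i| :=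
      Fintype.sum_equiv (Equiv.addRight (1 : Fin m)) _ _ (fun i => rfl)
    have e2 : ∑ i : Fin m, |v (i - 1)| = ∑ i : Fin m, |v i| :=
      Fintype.sum_equiv (Equiv.subRight (1 : Fin m)) _ _ (fun i => rfl)
    rw [Finset.sum_add_distrib, Finset.sum_add_distrib, ← Finset.mul_sum,
      ← Finset.mul_sum, ← Finset.mul_sum, e1, e2] at hsum
    nlinarith [hsum]
  · -- m = 1
    have hm : m = 1 := le_antisymm h1 (Nat.one_le_iff_ne_zero.mpr (NeZero.ne m))
    subst hm
    have h1σ : (0 : ℝ) ≤ 1 + σ := by linarith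
    have hA : (MatA 1 σ *ᵥ v) 0 = (1 + σ) * v 0 := by
      simp [MatA, Lap, Dminus, Dplus, Matrix.mulVec, dotProduct, Matrix.mul_apply,
        Matrix.one_apply, Matrix.sub_apply, Matrix.smul_apply, Fin.sum_univ_one]
    rw [Fin.sum_univ_one, Fin.sum_univ_one, hA, abs_mul, abs_of_nonneg h1σ]
    nlinarith [abs_nonneg (v 0)]

/-- If `d = A_σ⁻¹ g` then `‖D₊ᵖ d‖₁ ≤ ‖D₊ᵖ g‖₁` for every `p ∈ ℕ`. -/
theorem stmt9 (m : ℕ) [NeZero m] (σ : ℝ) (hσ : 0 ≤ σ)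
    (g d : Fin m → ℝ) (hd : d = (MatA m σ)⁻¹ *ᵥ g) (p : ℕ) :
    ∑ i, |((Dplus m ^ p) *ᵥ d) i| ≤ ∑ i, |((Dplus m ^ p) *ᵥ g) i| := by
  have hu : IsUnit (MatA m σ).det :=
    (Matrix.isUnit_iff_isUnit_det _).mp (matA_posDef m hσ).isUnit
  have hg : MatA m σ *ᵥ d = g := by
    rw [hd, Matrix.mulVec_mulVec, Matrix.mul_nonsing_inv _ hu, Matrix.one_mulVec]
  have hcm : (Dplus m) ^ p * MatA m σ = MatA m σ * (Dplus m) ^ p :=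
    ((commute_Dplus_MatA m σ).pow_left p)
  have hkey : (Dplus m ^ p) *ᵥ g = MatA m σ *ᵥ ((Dplus m ^ p) *ᵥ d) := by
    rw [← hg, Matrix.mulVec_mulVec, Matrix.mulVec_mulVec, hcm]
  rw [hkey]
  exact l1_contraction m hσ _
end
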